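/- arXiv:math/0310383 — 3 statements merged into one kernel-verified Lean document; each statement's English description precedes it below -/
import Mathlib

section
/- Shifting lemma, case (ii) average bound: Let (a_1,...,a_t) be positive integers bounded in average by B with a_t = B+1, a_k = B for s ≤ k ≤ t-1 (where 2 ≤ s ≤ t-1), and a_{s-1} < B. Then for every r with s-1 ≤ r ≤ t-1, one has a_1 + ... + a_r ≤ B*r - 1; consequently the sequence b with b_{s-1} = a_{s-1} + 1, b_t = a_t - 1, and b_j = a_j otherwise, is bounded in average by B. -/
theorem shifting_case_ii_avg (B t s : ℕ) (hB : 1 < B) (a : ℕ → ℕ)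
    (hpos : ∀ j, 1 ≤ j → j ≤ t → 0 < a j)
    (havg : ∀ r, 1 ≤ r → r ≤ t → ∑ j ∈ Finset.Icc 1 r, a j ≤ B * r)
    (hat : a t = B + 1) (hs2 : 2 ≤ s) (hst : s ≤ t - 1)
    (hmid : ∀ k, s ≤ k → k ≤ t - 1 → a k = B) (hsa : a (s - 1) < B)
    (b : ℕ → ℕ)
    (hb : ∀ j, b j = if j = s - 1 then a j + 1 else if j = t then a j - 1 else a j) :
    (∀ r, s - 1 ≤ r → r ≤ t - 1 → ∑ j ∈ Finset.Icc 1 r, a j ≤ B * r - 1) ∧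
      ∀ r, 1 ≤ r → r ≤ t → ∑ j ∈ Finset.Icc 1 r, b j ≤ B * r := by
  have ht3 : 3 ≤ t := by omega
  have hIcc : ∀ n : ℕ, Finset.Icc 1 n = Finset.Ioc 0 n := by
    intro n; ext x; simp [Finset.mem_Icc, Finset.mem_Ioc]; omega
  have hkey : ∀ r, s - 1 ≤ r → r ≤ t - 1 → ∑ j ∈ Finset.Icc 1 r, a j + 1 ≤ B * r := by
    intro r h1 h2
    have hrt : r ≤ t := by omega
    have hsplit : ∑ j ∈ Finset.Ioc 0 r, a j + ∑ j ∈ Finset.Ioc r t, a j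
        = ∑ j ∈ Finset.Ioc 0 t, a j :=
      Finset.sum_Ioc_consecutive _ (Nat.zero_le r) hrt
    have hsplit2 : ∑ j ∈ Finset.Ioc r (t-1), a j + ∑ j ∈ Finset.Ioc (t-1) t, a j
        = ∑ j ∈ Finset.Ioc r t, a j :=
      Finset.sum_Ioc_consecutive _ (by omega) (by omega)
    have hsingle : Finset.Ioc (t-1) t = {t} := by
      ext x; simp [Finset.mem_Ioc]; omega
    have hmidsum : ∑ j ∈ Finset.Ioc r (t-1), a j = (t - 1 - r) * B := by
      rw [Finset.sum_congr rfl (fun j hj => by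
        simp only [Finset.mem_Ioc] at hj
        exact hmid j (by omega) hj.2)]
      rw [Finset.sum_const, Nat.card_Ioc, smul_eq_mul]
    have htail : ∑ j ∈ Finset.Ioc r t, a j = (t - 1 - r) * B + (B + 1) := by
      rw [← hsplit2, hmidsum, hsingle, Finset.sum_singleton, hat]
    have hT := havg t (by omega) le_rfl
    rw [hIcc] at hT ⊢
    have hBt : B * t = B * r + (t - 1 - r) * B + B := by
      have h : t - 1 - r + r + 1 = t := by omega
      calc B * t = B * (t - 1 - r + r + 1) := by rw [h]
        _ = B * r + (t - 1 - r) * B + B := by ring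
    have := hsplit
    rw [htail] at this
    linarith
  have hbsum : ∀ r, s - 1 ≤ r → r ≤ t - 1 →
      ∑ j ∈ Finset.Icc 1 r, b j = ∑ j ∈ Finset.Icc 1 r, a j + 1 := by
    intro r h1 h2
    have hcongr : ∀ j ∈ Finset.Icc 1 r, b j = a j + (if j = s - 1 then 1 else 0) := by
      intro j hj
      simp only [Finset.mem_Icc] at hj
      rw [hb]
      by_cases h : j = s - 1
      · simp [h]
      · rw [if_neg h, if_neg (by omega), if_neg h, add_zero]
    rw [Finset.sum_congr rfl hcongr, Finset.sum_add_distrib,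
      Finset.sum_ite_eq' (Finset.Icc 1 r) (s - 1) (fun _ => 1)]
    have : s - 1 ∈ Finset.Icc 1 r := by simp [Finset.mem_Icc]; omega
    rw [if_pos this]
  refine ⟨fun r h1 h2 => by have := hkey r h1 h2; omega, fun r h1 h2 => ?_⟩
  rcases lt_or_ge r (s - 1) with hcase | hcase
  · have : ∑ j ∈ Finset.Icc 1 r, b j = ∑ j ∈ Finset.Icc 1 r, a j :=
      Finset.sum_congr rfl (fun j hj => by
        simp only [Finset.mem_Icc] at hj
        rw [hb, if_neg (by omega), if_neg (by omega)])
    rw [this]; exact havg r h1 h2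
  · by_cases hrt : r ≤ t - 1
    · rw [hbsum r hcase hrt]; exact hkey r hcase hrt
    · have hr : r = t := by omega
      rw [hr]
      have h1t : ∑ j ∈ Finset.Icc 1 ((t-1)+1), b j
          = ∑ j ∈ Finset.Icc 1 (t-1), b j + b ((t-1)+1) :=
        Finset.sum_Icc_succ_top (by omega) _
      have h1a : ∑ j ∈ Finset.Icc 1 ((t-1)+1), a j
          = ∑ j ∈ Finset.Icc 1 (t-1), a j + a ((t-1)+1) :=
        Finset.sum_Icc_succ_top (by omega) _
      have htt : (t-1)+1 = t := by omega
      rw [htt] at h1t h1a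
      have hbt : b t = B := by
        rw [hb, if_neg (by omega), if_pos rfl, hat]; omega
      have hsum1 := hbsum (t-1) (by omega) le_rfl
      have hT := havg t (by omega) le_rfl
      rw [h1a, hat] at hT
      rw [h1t, hbt, hsum1]
      omega
end

section
/- For any sequence (a_1,...,a_m) of positive integers bounded in average by 2, the continuant satisfies K(a_1,...,a_m) ≤ (1 + sqrt(2))^{m+1}. -/
/-- Auxiliary continuant, recursing on the first entry. -/
def contAux : List ℕ → ℕ
  | [] => 1
  | [a] => a
  | a :: b :: t => a * contAux (b :: t) + contAux t

/-- The continuant `K(a₁,…,aₘ)`: `K() = 1`, `K(a₁) = a₁`,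
`K(a₁,…,aₘ) = aₘ·K(a₁,…,a_{m-1}) + K(a₁,…,a_{m-2})`. -/
def continuant (l : List ℕ) : ℕ := contAux l.reverse

/-- A list of positive integers is bounded in average by `B` if every
prefix sum `a₁ + ⋯ + a_r` is at most `B·r`. -/
def BddAvg (B : ℕ) (l : List ℕ) : Prop :=
  ∀ r, 1 ≤ r → r ≤ l.length → (l.take r).sum ≤ B * r

lemma contAux_nil : contAux [] = 1 := rfl
lemma contAux_single (a : ℕ) : contAux [a] = a := rfl
lemma contAux_cons_cons (a b : ℕ) (t : List ℕ) :
    contAux (a :: b :: t) = a * contAux (b :: t) + contAux t := rfl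

lemma contAux_tail_le (y : ℕ) (t : List ℕ) (hy : 0 < y) :
    contAux t ≤ contAux (y :: t) := by
  match t with
  | [] => simpa [contAux_nil, contAux_single] using Nat.succ_le_of_lt hy
  | z :: t' =>
      rw [contAux_cons_cons]
      calc contAux (z :: t') ≤ y * contAux (z :: t') := Nat.le_mul_of_pos_left _ hy
        _ ≤ _ := Nat.le_add_right _ _

lemma aux_pow (k : ℕ) :
    ((k : ℝ) + 2 + Real.sqrt 2) ≤ (1 + Real.sqrt 2) * (Real.sqrt 2) ^ (k + 1) := by
  have hs : Real.sqrt 2 * Real.sqrt 2 = 2 := Real.mul_self_sqrt (by norm_num)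
  have hs1 : (1 : ℝ) ≤ Real.sqrt 2 := by nlinarith [Real.sqrt_nonneg 2]
  induction k with
  | zero =>
      push_cast
      rw [pow_one]
      nlinarith
  | succ k ih =>
      have hp : (1 : ℝ) ≤ (Real.sqrt 2) ^ (k + 1) := one_le_pow₀ hs1
      have he : (1 + Real.sqrt 2) * (Real.sqrt 2) ^ (k + 1 + 1)
          = Real.sqrt 2 * ((1 + Real.sqrt 2) * (Real.sqrt 2) ^ (k + 1)) := by ring
      rw [he]
      push_cast
      nlinarith [ih, hp]

/-- Key invariant lemma, stated for `contAux` on the reversed list. -/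
lemma key : ∀ (b : List ℕ), (∀ x ∈ b, 0 < x) →
    (∀ n, n ≤ b.length → (b.drop n).sum ≤ 2 * (b.length - n)) →
    (contAux b : ℝ) + (Real.sqrt 2 - 1) * (contAux b.tail : ℝ) ≤
      (1 + Real.sqrt 2) ^ (b.length + 1) * (Real.sqrt 2 / 2) ^ (2 * b.length - b.sum)
  | [], _, _ => by
      have hs1 : (1 : ℝ) ≤ Real.sqrt 2 := by
        nlinarith [Real.sqrt_nonneg 2, Real.mul_self_sqrt (show (0:ℝ) ≤ 2 by norm_num)]
      norm_num [contAux_nil]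
      try linarith
  | [x], hpos, hc => by
      have hs : Real.sqrt 2 * Real.sqrt 2 = 2 := Real.mul_self_sqrt (by norm_num)
      have hs0 : (0 : ℝ) ≤ Real.sqrt 2 := Real.sqrt_nonneg 2
      have hx1 : 1 ≤ x := hpos x (by simp)
      have hx2 : x ≤ 2 := by simpa using hc 0 (by simp)
      interval_cases x <;>
        · norm_num [contAux_single, contAux_nil]
          nlinarith
  | x :: y :: t, hpos, hc => by
      have hs : Real.sqrt 2 * Real.sqrt 2 = 2 := Real.mul_self_sqrt (by norm_num)
      have hs0 : (0 : ℝ) ≤ Real.sqrt 2 := Real.sqrt_nonneg 2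
      have hs1 : (1 : ℝ) ≤ Real.sqrt 2 := by nlinarith
      have hs2 : Real.sqrt 2 ≤ 2 := by nlinarith
      set s : ℝ := Real.sqrt 2 with hsdef
      have ihpos : ∀ z ∈ y :: t, 0 < z := fun z hz => hpos z (by simp [hz])
      have ihc : ∀ n, n ≤ (y :: t).length → ((y :: t).drop n).sum ≤ 2 * ((y :: t).length - n) := by
        intro n hn
        have := hc (n + 1) (by simpa using Nat.succ_le_succ hn)
        simpa using this
      have ih := key (y :: t) ihpos ihc
      simp only [List.tail_cons] at ih
      set K' : ℕ := contAux (y :: t) with hK'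
      set K'' : ℕ := contAux t with hK''
      have hmono : (K'' : ℝ) ≤ K' := by
        exact_mod_cast contAux_tail_le y t (hpos y (by simp))
      have hK''0 : (0 : ℝ) ≤ K'' := by positivity
      have hK'0 : (0 : ℝ) ≤ K' := by positivity
      have hsum0 : x + (y :: t).sum ≤ 2 * (t.length + 2) := by simpa using hc 0 (by simp)
      have hsum1 : (y :: t).sum ≤ 2 * (t.length + 1) := by simpa using hc 1 (by simp)
      set n : ℕ := t.length with hn
      set S : ℕ := (y :: t).sum with hS
      have hlen : (x :: y :: t).length = n + 2 := by simp [hn]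
      have hsum : (x :: y :: t).sum = x + S := by simp [hS]
      rw [hlen, hsum, contAux_cons_cons]
      have hlen' : (y :: t).length = n + 1 := by simp [hn]
      rw [hlen'] at ih
      show ((x * K' + K'' : ℕ) : ℝ) + (s - 1) * (K' : ℝ)
          ≤ (1 + s) ^ (n + 2 + 1) * (s / 2) ^ (2 * (n + 2) - (x + S))
      have hx1 : 1 ≤ x := hpos x (by simp)
      rcases Nat.lt_or_ge x 3 with hx3 | hx3
      · interval_cases x
        · -- x = 1
          have hd : 2 * (n + 2) - (1 + S) = (2 * (n + 1) - S) + 1 := by omega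
          rw [hd]
          push_cast
          have hid : (1 + s) * (s / 2) * ((K' : ℝ) + (s - 1) * K'')
              = ((s + 2) / 2) * (K' : ℝ) + (s / 2) * (K'' : ℝ) := by
            linear_combination ((K' : ℝ) / 2 + s * (K'' : ℝ) / 2) * hs
          have hkey : (1 : ℝ) * K' + K'' + (s - 1) * K'
              ≤ (1 + s) * (s / 2) * ((K' : ℝ) + (s - 1) * K'') := by
            rw [hid]
            nlinarith [mul_nonneg (sub_nonneg.2 hmono) (by linarith : (0:ℝ) ≤ 2 - s)]
          calc (1 : ℝ) * K' + K'' + (s - 1) * K'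
              ≤ (1 + s) * (s / 2) * ((K' : ℝ) + (s - 1) * K'') := hkey
            _ ≤ (1 + s) * (s / 2) * ((1 + s) ^ (n + 1 + 1) * (s / 2) ^ (2 * (n + 1) - S)) := by
                apply mul_le_mul_of_nonneg_left ih (by positivity)
            _ = (1 + s) ^ (n + 2 + 1) * (s / 2) ^ ((2 * (n + 1) - S) + 1) := by
                ring
        · -- x = 2
          have hd : 2 * (n + 2) - (2 + S) = 2 * (n + 1) - S := by omega
          rw [hd]
          push_cast
          have hkey : (2 : ℝ) * K' + K'' + (s - 1) * K'
              ≤ (1 + s) * ((K' : ℝ) + (s - 1) * K'') := by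
            nlinarith [hK''0]
          calc (2 : ℝ) * K' + K'' + (s - 1) * K'
              ≤ (1 + s) * ((K' : ℝ) + (s - 1) * K'') := hkey
            _ ≤ (1 + s) * ((1 + s) ^ (n + 1 + 1) * (s / 2) ^ (2 * (n + 1) - S)) := by
                apply mul_le_mul_of_nonneg_left ih (by positivity)
            _ = (1 + s) ^ (n + 2 + 1) * (s / 2) ^ (2 * (n + 1) - S) := by ring
      · -- x ≥ 3
        obtain ⟨k, rfl⟩ : ∃ k, x = k + 3 := ⟨x - 3, by omega⟩
        push_cast
        have hd : 2 * (n + 1) - S = (2 * (n + 2) - (k + 3 + S)) + (k + 1) := by omega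
        rw [hd] at ih
        rw [show ((s / 2 : ℝ)) ^ ((2 * (n + 2) - (k + 3 + S)) + (k + 1))
              = (s / 2) ^ (2 * (n + 2) - (k + 3 + S)) * (s / 2) ^ (k + 1) from pow_add _ _ _] at ih
        set d : ℕ := 2 * (n + 2) - (k + 3 + S) with hdd
        have haux := aux_pow k
        rw [← hsdef] at haux
        have hcpow0 : (0 : ℝ) ≤ (s / 2) ^ (k + 1) := by positivity
        have hprod : (s / 2) ^ (k + 1) * s ^ (k + 1) = 1 := by
          rw [← mul_pow]
          have hone : s / 2 * s = 1 := by
            field_simp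
            linarith [hs]
          rw [hone, one_pow]
        have hcoef : ((k : ℝ) + 3 + s - 1) * (s / 2) ^ (k + 1) ≤ 1 + s := by
          have h1 : ((k : ℝ) + 3 + s - 1) * (s / 2) ^ (k + 1)
              ≤ ((1 + s) * s ^ (k + 1)) * (s / 2) ^ (k + 1) := by
            apply mul_le_mul_of_nonneg_right _ hcpow0
            calc ((k : ℝ) + 3 + s - 1) = (k : ℝ) + 2 + s := by ring
              _ ≤ (1 + s) * s ^ (k + 1) := haux
          calc ((k : ℝ) + 3 + s - 1) * (s / 2) ^ (k + 1)
              ≤ ((1 + s) * s ^ (k + 1)) * (s / 2) ^ (k + 1) := h1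
            _ = (1 + s) * ((s / 2) ^ (k + 1) * s ^ (k + 1)) := by ring
            _ = 1 + s := by rw [hprod]; ring
        have hid2 : ((k : ℝ) + 3 + s - 1) * ((K' : ℝ) + (s - 1) * K'')
            = ((k : ℝ) + 2 + s) * K' + (((k : ℝ) + 1) * (s - 1) + 1) * K'' := by
          linear_combination (K'' : ℝ) * hs
        have hstep1 : ((k : ℝ) + 3) * K' + K'' + (s - 1) * K'
            ≤ ((k : ℝ) + 3 + s - 1) * ((K' : ℝ) + (s - 1) * K'') := by
          rw [hid2]
          nlinarith [mul_nonneg (mul_nonneg (by positivity : (0:ℝ) ≤ (k:ℝ) + 1) (by linarith : (0:ℝ) ≤ s - 1)) hK''0]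
        have hBpos : (0 : ℝ) ≤ (1 + s) ^ (n + 1 + 1) * (s / 2) ^ d := by positivity
        calc ((k : ℝ) + 3) * K' + K'' + (s - 1) * K'
            ≤ ((k : ℝ) + 3 + s - 1) * ((K' : ℝ) + (s - 1) * K'') := hstep1
          _ ≤ ((k : ℝ) + 3 + s - 1) * ((1 + s) ^ (n + 1 + 1) * ((s / 2) ^ d * (s / 2) ^ (k + 1))) := by
              refine mul_le_mul_of_nonneg_left ih ?_
              have hk0 : (0:ℝ) ≤ (k:ℝ) := Nat.cast_nonneg k
              linarith
          _ = (((k : ℝ) + 3 + s - 1) * (s / 2) ^ (k + 1)) * ((1 + s) ^ (n + 1 + 1) * (s / 2) ^ d) := by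
              ring
          _ ≤ (1 + s) * ((1 + s) ^ (n + 1 + 1) * (s / 2) ^ d) :=
              mul_le_mul_of_nonneg_right hcoef hBpos
          _ = (1 + s) ^ (n + 2 + 1) * (s / 2) ^ d := by ring

theorem continuant_le_of_bddAvg_two (a : List ℕ)
    (ha : ∀ x ∈ a, 0 < x) (havg : BddAvg 2 a) :
    (continuant a : ℝ) ≤ (1 + Real.sqrt 2) ^ (a.length + 1) := by
  have hs : Real.sqrt 2 * Real.sqrt 2 = 2 := Real.mul_self_sqrt (by norm_num)
  have hs0 : (0 : ℝ) ≤ Real.sqrt 2 := Real.sqrt_nonneg 2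
  have hs1 : (1 : ℝ) ≤ Real.sqrt 2 := by nlinarith
  have hs2 : Real.sqrt 2 ≤ 2 := by nlinarith
  have hpos : ∀ x ∈ a.reverse, 0 < x := by
    intro x hx; exact ha x (List.mem_reverse.mp hx)
  have hc : ∀ n, n ≤ a.reverse.length → (a.reverse.drop n).sum ≤ 2 * (a.reverse.length - n) := by
    intro n hn
    rw [List.drop_reverse, List.sum_reverse, List.length_reverse]
    rw [List.length_reverse] at hn
    rcases Nat.eq_or_lt_of_le hn with h | h
    · simp [h]
    · exact havg (a.length - n) (by omega) (by omega)
  have hk := key a.reverse hpos hc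
  rw [List.length_reverse] at hk
  have h1 : (continuant a : ℝ)
      ≤ (contAux a.reverse : ℝ) + (Real.sqrt 2 - 1) * (contAux a.reverse.tail : ℝ) := by
    have hnn : (0 : ℝ) ≤ (Real.sqrt 2 - 1) * (contAux a.reverse.tail : ℝ) :=
      mul_nonneg (by linarith) (by positivity)
    unfold continuant
    linarith
  have h2 : ((Real.sqrt 2 / 2) : ℝ) ^ (2 * a.length - a.reverse.sum) ≤ 1 :=
    pow_le_one₀ (by positivity) (by linarith)
  calc (continuant a : ℝ) ≤ _ := h1
    _ ≤ (1 + Real.sqrt 2) ^ (a.length + 1) * (Real.sqrt 2 / 2) ^ (2 * a.length - a.reverse.sum) := hk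
    _ ≤ (1 + Real.sqrt 2) ^ (a.length + 1) * 1 :=
        mul_le_mul_of_nonneg_left h2 (by positivity)
    _ = (1 + Real.sqrt 2) ^ (a.length + 1) := mul_one _
end

section
/- Let S̄_n(2) denote the number of finite sequences of positive integers bounded in average by 2 whose continuant is at most n. Then for every ε > 0, S̄_n(2) ≫ n^{2 log 2 / log(1+√2) − ε}; i.e., liminf_{n→∞} log(S̄_n(2))/log n ≥ 2 log 2 / log(1+√2) ≈ 1.5728394. -/
open List

noncomputable section

namespace Sbar

def xx : ℝ := 1 + Real.sqrt 2

lemma s2_lb : (1.41421356 : ℝ) < Real.sqrt 2 := by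
  rw [show (1.41421356 : ℝ) = Real.sqrt (1.41421356^2) by
    rw [Real.sqrt_sq]; norm_num]
  apply Real.sqrt_lt_sqrt <;> norm_num

lemma s2_ub : Real.sqrt 2 < 1.41421357 := by
  rw [show (1.41421357 : ℝ) = Real.sqrt (1.41421357^2) by
    rw [Real.sqrt_sq]; norm_num]
  apply Real.sqrt_lt_sqrt <;> norm_num

lemma s2_sq : Real.sqrt 2 ^ 2 = 2 := Real.sq_sqrt (by norm_num)

lemma xx_gt : (2.41421356 : ℝ) < xx := by have := s2_lb; unfold xx; linarith
lemma xx_lt : xx < 2.41421357 := by have := s2_ub; unfold xx; linarith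
lemma xx_pos : (0:ℝ) < xx := by have := xx_gt; linarith
lemma xx_ne : xx ≠ 0 := ne_of_gt xx_pos
lemma one_lt_xx : (1:ℝ) < xx := by have := xx_gt; linarith
lemma xx_sq : xx ^ 2 = 2 * xx + 1 := by
  have := s2_sq; unfold xx; nlinarith

/-- the per-entry growth factor of the invariant bound -/
def rho (a : ℕ) : ℝ := xx ^ ((a:ℤ) - 1) * (13/8:ℝ) ^ (2 - (a:ℤ))

lemma rho_pos (a : ℕ) : 0 < rho a := by
  unfold rho
  exact mul_pos (zpow_pos xx_pos _) (zpow_pos (by norm_num) _)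

lemma rho_succ (a : ℕ) : rho (a + 1) = rho a * (xx * (8/13)) := by
  unfold rho
  have h1 : ((a + 1 : ℕ) : ℤ) - 1 = ((a:ℤ) - 1) + 1 := by push_cast; ring
  have h2 : (2 - ((a + 1 : ℕ) : ℤ)) = (2 - (a:ℤ)) + (-1) := by push_cast; ring
  rw [h1, h2, zpow_add₀ xx_ne, zpow_add₀ (by norm_num : (13/8:ℝ) ≠ 0)]
  norm_num
  ring

lemma rho_one : rho 1 = 13/8 := by
  unfold rho; norm_num

lemma rho_two : rho 2 = xx := by
  unfold rho
  norm_num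

lemma rho_three : rho 3 = xx ^ 2 * (8/13) := by
  have : rho 3 = rho 2 * (xx * (8/13)) := rho_succ 2
  rw [this, rho_two]; ring

lemma xx813 : (1:ℝ) ≤ xx * (8/13) := by have := xx_gt; nlinarith

lemma rho_ge_y : ∀ a : ℕ, 1 ≤ a → (13/8 : ℝ) ≤ rho a := by
  intro a ha
  induction a, ha using Nat.le_induction with
  | base => rw [rho_one]
  | succ a ha ih =>
    rw [rho_succ]
    calc (13/8:ℝ) ≤ rho a := ih
    _ = rho a * 1 := by ring
    _ ≤ rho a * (xx * (8/13)) := by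
        apply mul_le_mul_of_nonneg_left xx813 (le_of_lt (rho_pos a))

lemma rho_ge_x : ∀ a : ℕ, 2 ≤ a → xx ≤ rho a := by
  intro a ha
  induction a, ha using Nat.le_induction with
  | base => rw [rho_two]
  | succ a ha ih =>
    rw [rho_succ]
    calc xx ≤ rho a := ih
    _ = rho a * 1 := by ring
    _ ≤ rho a * (xx * (8/13)) := by
        apply mul_le_mul_of_nonneg_left xx813 (le_of_lt (rho_pos a))

lemma rho_four : (5:ℝ) ≤ rho 4 := by
  have : rho 4 = rho 3 * (xx * (8/13)) := rho_succ 3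
  rw [this, rho_three]
  have h := xx_gt
  nlinarith

lemma rho_ge_lin : ∀ a : ℕ, 4 ≤ a → (5/4 : ℝ) * a ≤ rho a := by
  intro a ha
  induction a, ha using Nat.le_induction with
  | base => simpa using rho_four
  | succ a ha ih =>
    rw [rho_succ]
    have ha' : (4:ℝ) ≤ (a:ℝ) := by exact_mod_cast ha
    have h1 : (5/4:ℝ) * (a + 1) ≤ ((5/4:ℝ) * a) * (xx * (8/13)) := by
      have := xx_gt; nlinarith
    calc (5/4:ℝ) * ((a:ℕ)+1 : ℕ) = (5/4:ℝ) * ((a:ℝ)+1) := by push_cast; ring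
    _ ≤ ((5/4:ℝ) * a) * (xx * (8/13)) := h1
    _ ≤ rho a * (xx * (8/13)) := by
        apply mul_le_mul_of_nonneg_right ih
        have := xx_gt; nlinarith

/-- the invariant weight -/
def Ee (l : List ℕ) : ℝ :=
  xx ^ ((l.sum : ℤ) - l.length) * (13/8 : ℝ) ^ (2 * (l.length : ℤ) - l.sum)

lemma Ee_pos (l : List ℕ) : 0 < Ee l :=
  mul_pos (zpow_pos xx_pos _) (zpow_pos (by norm_num) _)

lemma Ee_nil : Ee [] = 1 := by simp [Ee]

lemma Ee_cons (a : ℕ) (l : List ℕ) : Ee (a :: l) = rho a * Ee l := by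
  unfold Ee rho
  rw [length_cons, sum_cons]
  have h1 : ((a + l.sum : ℕ) : ℤ) - ((l.length + 1 : ℕ) : ℤ)
      = ((a:ℤ) - 1) + ((l.sum:ℤ) - l.length) := by push_cast; ring
  have h2 : 2 * ((l.length + 1 : ℕ) : ℤ) - ((a + l.sum : ℕ) : ℤ)
      = (2 - (a:ℤ)) + (2 * (l.length:ℤ) - l.sum) := by push_cast; ring
  rw [h1, h2, zpow_add₀ xx_ne, zpow_add₀ (by norm_num : (13/8:ℝ) ≠ 0)]
  ring

/-- positive entries, all suffixes have sum at most twice length -/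
def Good (l : List ℕ) : Prop :=
  (∀ a ∈ l, 1 ≤ a) ∧ ∀ t : List ℕ, t <:+ l → t.sum ≤ 2 * t.length

lemma Good.suffix {l t : List ℕ} (h : Good l) (ht : t <:+ l) : Good t :=
  ⟨fun a ha => h.1 a (ht.subset ha), fun s hs => h.2 s (hs.trans ht)⟩

lemma Good.of_cons {a : ℕ} {l : List ℕ} (h : Good (a :: l)) : Good l :=
  h.suffix (suffix_cons a l)

lemma one_le_contAux : ∀ (l : List ℕ), (∀ a ∈ l, 1 ≤ a) → 1 ≤ contAux l
  | [], _ => le_refl _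
  | [a], h => by simpa [contAux] using h a (by simp)
  | a :: b :: t, h => by
    have hb : 1 ≤ contAux (b :: t) :=
      one_le_contAux (b :: t) (fun x hx => h x (by simp [hx]))
    have ha : 1 ≤ a := h a (by simp)
    show 1 ≤ a * contAux (b :: t) + contAux t
    calc 1 = 1 * 1 := by ring
    _ ≤ a * contAux (b :: t) := Nat.mul_le_mul ha hb
    _ ≤ _ := Nat.le_add_right _ _

lemma contAux_tail_le (l : List ℕ) (h : ∀ a ∈ l, 1 ≤ a) :
    contAux l.tail ≤ contAux l := by
  match l with
  | [] => exact le_refl _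
  | [a] => simpa [contAux] using h a (by simp)
  | a :: b :: t =>
    have ha : 1 ≤ a := h a (by simp)
    show contAux (b :: t) ≤ a * contAux (b :: t) + contAux t
    calc contAux (b :: t) = 1 * contAux (b :: t) := by ring
    _ ≤ a * contAux (b :: t) := Nat.mul_le_mul_right _ ha
    _ ≤ _ := Nat.le_add_right _ _

lemma length_le_contAux : ∀ (l : List ℕ), (∀ a ∈ l, 1 ≤ a) → l.length ≤ contAux l
  | [], _ => by simp [contAux]
  | [a], h => by simpa [contAux] using h a (by simp)
  | a :: b :: t, h => by
    have hb : (b :: t).length ≤ contAux (b :: t) :=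
      length_le_contAux (b :: t) (fun x hx => h x (by simp [hx]))
    have ha : 1 ≤ a := h a (by simp)
    have ht : 1 ≤ contAux t := one_le_contAux t (fun x hx => h x (by simp [hx]))
    show (a :: b :: t).length ≤ a * contAux (b :: t) + contAux t
    have : contAux (b :: t) ≤ a * contAux (b :: t) := Nat.le_mul_of_pos_left _ ha
    simp only [length_cons] at *
    omega

/-- The key inductive invariant. -/
lemma key : ∀ (n : ℕ) (l : List ℕ), l.length ≤ n → Good l →
    ((contAux l : ℝ) ≤ Ee l ∧
      ∀ a t, l = a :: t → (contAux l : ℝ) + (3/5) * (contAux t : ℝ) ≤ (5/4) * Ee l) := by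
  intro n
  induction n with
  | zero =>
    intro l hl _
    have : l = [] := List.eq_nil_of_length_eq_zero (Nat.le_zero.mp hl)
    subst this
    refine ⟨by simp [contAux, Ee_nil], fun a t h => by simp at h⟩
  | succ n ih =>
    intro l hl hg
    match l with
    | [] => refine ⟨by simp [contAux, Ee_nil], fun a t h => by simp at h⟩
    | [a] =>
      have ha1 : 1 ≤ a := hg.1 a (by simp)
      have ha2 : a ≤ 2 := by
        have := hg.2 [a] (by simp)
        simpa using this
      have hE : Ee [a] = rho a := by rw [Ee_cons, Ee_nil, mul_one]
      interval_cases a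
      · constructor
        · rw [hE, rho_one]; norm_num [contAux]
        · intro a t h
          injection h with h1 h2; subst h1; subst h2
          rw [hE, rho_one]; norm_num [contAux]
      · constructor
        · rw [hE, rho_two]; have := xx_gt; norm_num [contAux]; linarith
        · intro a t h
          injection h with h1 h2; subst h1; subst h2
          rw [hE, rho_two]; have := xx_gt; norm_num [contAux]; linarith
    | a :: a' :: t =>
      -- notation
      have good0 : Good (a' :: t) := hg.of_cons
      have good1 : Good t := good0.of_cons
      have hlen0 : (a' :: t).length ≤ n := by simpa using hl
      have hlen1 : t.length ≤ n := by simp at hl; omega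
      obtain ⟨hA0, hB0'⟩ := ih (a' :: t) hlen0 good0
      have hB0 : (contAux (a' :: t) : ℝ) + (3/5) * (contAux t : ℝ)
          ≤ (5/4) * Ee (a' :: t) := hB0' a' t rfl
      have hA1 : (contAux t : ℝ) ≤ Ee t := (ih t hlen1 good1).1
      set K0 : ℝ := (contAux (a' :: t) : ℝ) with hK0def
      set K1 : ℝ := (contAux t : ℝ) with hK1def
      set E0 : ℝ := Ee (a' :: t) with hE0def
      have hE0pos : 0 < E0 := Ee_pos _
      have hK1pos : (1:ℝ) ≤ K1 := by
        rw [hK1def]; exact_mod_cast one_le_contAux t good1.1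
      have hK0pos : (1:ℝ) ≤ K0 := by
        rw [hK0def]; exact_mod_cast one_le_contAux (a' :: t) good0.1
      have hK1K0 : K1 ≤ K0 := by
        have h := contAux_tail_le (a' :: t) good0.1
        simp only [List.tail_cons] at h
        rw [hK0def, hK1def]; exact_mod_cast h
      have ha'1 : 1 ≤ a' := good0.1 a' (by simp)
      have ha1 : 1 ≤ a := hg.1 a (by simp)
      have hEt : E0 = rho a' * Ee t := Ee_cons a' t
      -- case facts on a'
      have hcase : ((13/8:ℝ) * K1 ≤ E0 ∧ K0 ≤ 2 * K1) ∨ (xx * K1 ≤ E0) := by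
        rcases Nat.lt_or_ge a' 2 with h2 | h2
        · have ha'e : a' = 1 := by omega
          left
          constructor
          · rw [hEt, ha'e, rho_one]
            have := Ee_pos t
            linarith
          · -- K0 = contAux (1 :: t) ≤ 2 * K1
            have hnat : contAux (a' :: t) ≤ 2 * contAux t := by
              rw [ha'e]
              match t with
              | [] => norm_num [contAux]
              | b :: t' =>
                have htail : contAux t' ≤ contAux (b :: t') := by
                  have h := contAux_tail_le (b :: t') good1.1
                  simpa using h
                show 1 * contAux (b :: t') + contAux t' ≤ 2 * contAux (b :: t')
                omega
            rw [hK0def, hK1def]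
            exact_mod_cast hnat
        · right
          rw [hEt]
          have hx := rho_ge_x a' h2
          have hEtpos := Ee_pos t
          have hK1nn : (0:ℝ) ≤ K1 := le_trans zero_le_one hK1pos
          exact mul_le_mul hx hA1 hK1nn (le_of_lt (rho_pos a'))
      -- the new continuant
      have hcont : (contAux (a :: a' :: t) : ℝ) = a * K0 + K1 := by
        show ((a * contAux (a' :: t) + contAux t : ℕ) : ℝ) = _
        push_cast
        rw [hK0def, hK1def]
      have hEe : Ee (a :: a' :: t) = rho a * E0 := Ee_cons a (a' :: t)
      have hK1nn : (0:ℝ) ≤ K1 := le_trans zero_le_one hK1pos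
      have hK0nn : (0:ℝ) ≤ K0 := le_trans zero_le_one hK0pos
      clear_value K0 K1 E0
      -- goals
      have main : (a:ℝ) * K0 + K1 ≤ rho a * E0 ∧
          ((a:ℝ) + 3/5) * K0 + K1 ≤ (5/4) * (rho a * E0) := by
        rcases Nat.lt_or_ge a 4 with h4 | h4
        · have hxg := xx_gt
          interval_cases a
          · -- a = 1
            rw [rho_one]
            rcases hcase with ⟨hy, h2K⟩ | hx
            · refine ⟨?_, ?_⟩ <;> (push_cast; linarith)
            · have hK1E : (2.41421356:ℝ) * K1 ≤ E0 := by
                have h := mul_le_mul_of_nonneg_right (le_of_lt hxg) hK1nn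
                linarith
              refine ⟨?_, ?_⟩ <;> (push_cast; linarith)
          · -- a = 2
            rw [rho_two]
            have hxE : (2.41421356:ℝ) * E0 ≤ xx * E0 :=
              mul_le_mul_of_nonneg_right (le_of_lt hxg) (le_of_lt hE0pos)
            rcases hcase with ⟨hy, h2K⟩ | hx
            · refine ⟨?_, ?_⟩ <;> (push_cast; linarith)
            · have h1 : (xx - 2) * (xx * K1) ≤ (xx - 2) * E0 :=
                mul_le_mul_of_nonneg_left hx (by linarith)
              have h2 : (xx - 2) * (xx * K1) = K1 := by linear_combination K1 * xx_sq
              have h3 : K1 ≤ (xx - 2) * E0 := by linarith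
              have h4 : (xx - 2) * E0 = xx * E0 - 2 * E0 := by ring
              refine ⟨?_, ?_⟩ <;> (push_cast; linarith)
          · -- a = 3
            have hr3 : (3.5865:ℝ) ≤ xx ^ 2 * (8/13) := by nlinarith [xx_sq]
            rw [rho_three]
            have hr3E : (3.5865:ℝ) * E0 ≤ (xx ^ 2 * (8/13)) * E0 :=
              mul_le_mul_of_nonneg_right hr3 (le_of_lt hE0pos)
            rcases hcase with ⟨hy, h2K⟩ | hx
            · refine ⟨?_, ?_⟩ <;> (push_cast; linarith)
            · have hK1E : (2.41421356:ℝ) * K1 ≤ E0 := by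
                have h := mul_le_mul_of_nonneg_right (le_of_lt hxg) hK1nn
                linarith
              refine ⟨?_, ?_⟩ <;> (push_cast; linarith)
        · -- a ≥ 4
          have hra := rho_ge_lin a h4
          have ha4 : (4:ℝ) ≤ (a:ℝ) := by exact_mod_cast h4
          have hanne : (0:ℝ) ≤ (a:ℝ) := by linarith
          have h1 : (a:ℝ) * (K0 + (3/5) * K1) ≤ (a:ℝ) * ((5/4) * E0) :=
            mul_le_mul_of_nonneg_left hB0 hanne
          have h2 : (0:ℝ) ≤ ((3/5) * (a:ℝ) - 1) * K1 :=
            mul_nonneg (by linarith) hK1nn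
          have h3 : ((5/4) * (a:ℝ)) * E0 ≤ rho a * E0 :=
            mul_le_mul_of_nonneg_right hra (le_of_lt hE0pos)
          have h6 : (4:ℝ) * E0 ≤ (a:ℝ) * E0 :=
            mul_le_mul_of_nonneg_right ha4 (le_of_lt hE0pos)
          constructor
          · linarith [h1, h2, h3]
          · linarith [h1, h2, h3, h6, hB0, hK1nn, hE0pos]
      constructor
      · rw [hcont, hEe]
        exact main.1
      · intro b s hbs
        injection hbs with hb hs
        subst hb; subst hs
        rw [hcont, hEe, ← hK0def]
        linarith [main.2]

lemma length_le_sum : ∀ (l : List ℕ), (∀ a ∈ l, 1 ≤ a) → l.length ≤ l.sum := by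
  intro l h
  induction l with
  | nil => simp
  | cons a t ih =>
    simp only [length_cons, sum_cons]
    have := h a (by simp)
    have := ih (fun x hx => h x (by simp [hx]))
    omega

lemma contAux_le_pow {l : List ℕ} (hg : Good l) : (contAux l : ℝ) ≤ xx ^ l.length := by
  have h1 : (contAux l : ℝ) ≤ Ee l := (key l.length l le_rfl hg).1
  refine h1.trans ?_
  have hsr : l.length ≤ l.sum := length_le_sum l hg.1
  have hs2r : l.sum ≤ 2 * l.length := hg.2 l (suffix_refl l)
  unfold Ee
  have e1 : (l.sum : ℤ) - l.length = ((l.sum - l.length : ℕ) : ℤ) := by omega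
  have e2 : 2 * (l.length : ℤ) - l.sum = ((2 * l.length - l.sum : ℕ) : ℤ) := by omega
  rw [e1, e2, zpow_natCast, zpow_natCast]
  have hyx : ((13:ℝ)/8) ^ (2 * l.length - l.sum) ≤ xx ^ (2 * l.length - l.sum) := by
    apply pow_le_pow_left₀ (by norm_num)
    have := xx_gt; linarith
  calc xx ^ (l.sum - l.length) * (13/8:ℝ) ^ (2 * l.length - l.sum)
      ≤ xx ^ (l.sum - l.length) * xx ^ (2 * l.length - l.sum) := by
        apply mul_le_mul_of_nonneg_left hyx (le_of_lt (pow_pos xx_pos _))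
    _ = xx ^ ((l.sum - l.length) + (2 * l.length - l.sum)) := by rw [pow_add]
    _ = xx ^ l.length := by congr 1; omega

section Dyck

open DyckStep

/-- decode a reversed Dyck word into run lengths -/
def dec : List DyckStep → ℕ → List ℕ
  | [], _ => []
  | D :: t, acc => dec t (acc + 1)
  | U :: t, acc => acc :: dec t 0

/-- trailing run helper -/
def trail : List DyckStep → ℕ → ℕ
  | [], acc => acc
  | D :: t, acc => trail t (acc + 1)
  | U :: t, _ => trail t 0

/-- encode run lengths into a (reversed) Dyck word -/
def enc : List ℕ → List DyckStep
  | [] => []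
  | c :: t => List.replicate c D ++ U :: enc t

lemma enc_append (s t : List ℕ) : enc (s ++ t) = enc s ++ enc t := by
  induction s with
  | nil => rfl
  | cons c s ih => simp [enc, ih]

lemma count_D_enc : ∀ u : List ℕ, (enc u).count D = u.sum
  | [] => rfl
  | c :: t => by
    simp [enc, count_append, count_replicate, count_cons, count_D_enc t]

lemma count_U_enc : ∀ u : List ℕ, (enc u).count U = u.length
  | [] => rfl
  | c :: t => by
    simp [enc, count_append, count_replicate, count_cons, count_U_enc t]

lemma enc_dec : ∀ (v : List DyckStep) (acc : ℕ),
    enc (dec v acc) ++ List.replicate (trail v acc) D = List.replicate acc D ++ v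
  | [], acc => by simp [dec, trail, enc]
  | D :: t, acc => by
    have ih := enc_dec t (acc + 1)
    show enc (dec t (acc + 1)) ++ List.replicate (trail t (acc + 1)) D = _
    rw [ih, replicate_succ', append_assoc]
    rfl
  | U :: t, acc => by
    have ih := enc_dec t 0
    show enc (acc :: dec t 0) ++ List.replicate (trail t 0) D = _
    show (List.replicate acc D ++ U :: enc (dec t 0)) ++ _ = _
    simp only [append_assoc, cons_append]
    rw [ih]
    rfl

lemma trail_concat_U : ∀ (v : List DyckStep) (acc : ℕ), trail (v ++ [U]) acc = 0
  | [], acc => rfl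
  | D :: t, acc => trail_concat_U t (acc + 1)
  | U :: t, acc => trail_concat_U t 0

/-- run-length data of a Dyck word -/
def uOf (p : DyckWord) : List ℕ := dec p.toList.reverse 0

/-- the bounded-in-average list attached to a Dyck word -/
def lOf (p : DyckWord) : List ℕ := ((uOf p).tail.map (· + 1)).reverse

variable {p : DyckWord} (hp : p.toList ≠ [])

lemma enc_uOf (hp : p.toList ≠ []) : enc (uOf p) = p.toList.reverse := by
  have hform : p.toList.reverse = p.toList.tail.reverse ++ [U] := by
    conv_lhs => rw [← cons_head_tail hp, p.head_eq_U hp]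
    simp
  have h := enc_dec p.toList.reverse 0
  rw [hform, trail_concat_U, ← hform] at h
  simpa [uOf] using h

lemma length_uOf (hp : p.toList ≠ []) : (uOf p).length = p.semilength := by
  have h := congrArg (fun l => l.count U) (enc_uOf hp)
  simp only [count_U_enc, count_reverse] at h
  exact h

lemma sum_uOf (hp : p.toList ≠ []) : (uOf p).sum = p.semilength := by
  have h := congrArg (fun l => l.count D) (enc_uOf hp)
  simp only [count_D_enc, count_reverse] at h
  rw [h, DyckWord.semilength_eq_count_D]

lemma suffix_sum_le (hp : p.toList ≠ []) :
    ∀ σ : List ℕ, σ <:+ uOf p → σ.sum ≤ σ.length := by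
  intro σ hσ
  obtain ⟨pre, hpre⟩ := hσ
  have hsuf : enc σ <:+ p.toList.reverse := by
    rw [← enc_uOf hp, ← hpre, enc_append]
    exact suffix_append (enc pre) (enc σ)
  have hpref : (enc σ).reverse <+: p.toList := by
    rw [← reverse_suffix]
    simpa using hsuf
  have heq : (enc σ).reverse = p.toList.take ((enc σ).reverse).length :=
    prefix_iff_eq_take.mp hpref
  have hcnt := p.count_D_le_count_U ((enc σ).reverse).length
  rw [← heq] at hcnt
  simpa [count_reverse, count_D_enc, count_U_enc] using hcnt

lemma sum_map_succ : ∀ (σ : List ℕ), (σ.map (· + 1)).sum = σ.sum + σ.length := by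
  intro σ
  induction σ with
  | nil => simp
  | cons c t ih => simp [ih]; omega

lemma good_zOf (hp : p.toList ≠ []) : Good ((uOf p).tail.map (· + 1)) := by
  constructor
  · intro a ha
    obtain ⟨c, _, rfl⟩ := mem_map.mp ha
    omega
  · intro s hs
    set z := (uOf p).tail.map (· + 1) with hz
    have hlen : s.length ≤ z.length := hs.length_le
    have hdrop : s = z.drop (z.length - s.length) := suffix_iff_eq_drop.mp hs
    set i := z.length - s.length with hi
    have hzd : z.drop i = ((uOf p).tail.drop i).map (· + 1) := by
      rw [hz, map_drop]
    set σ := (uOf p).tail.drop i with hσ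
    have hσsuf : σ <:+ uOf p := (drop_suffix i _).trans (tail_suffix (uOf p))
    have h1 : σ.sum ≤ σ.length := suffix_sum_le hp σ hσsuf
    have h2 : s.sum = σ.sum + σ.length := by rw [hdrop, hzd, sum_map_succ]
    have h3 : s.length = σ.length := by
      rw [hdrop, hzd, length_map]
    omega

lemma lOf_pos (hp : p.toList ≠ []) : ∀ x ∈ lOf p, 0 < x := by
  intro x hx
  rw [lOf, mem_reverse] at hx
  obtain ⟨c, _, rfl⟩ := mem_map.mp hx
  omega

lemma lOf_bddAvg (hp : p.toList ≠ []) : BddAvg 2 (lOf p) := by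
  intro r hr1 hr2
  rw [lOf, length_reverse] at hr2
  rw [lOf, take_reverse, sum_reverse]
  set z := (uOf p).tail.map (· + 1) with hz
  have hzg : Good z := good_zOf hp
  have hsum := hzg.2 _ (drop_suffix (z.length - r) z)
  have hlen : (z.drop (z.length - r)).length = r := by
    rw [length_drop]; omega
  rw [hlen] at hsum
  exact hsum

lemma lOf_continuant (hp : p.toList ≠ []) :
    (continuant (lOf p) : ℝ) ≤ xx ^ ((uOf p).tail.length) := by
  have : continuant (lOf p) = contAux ((uOf p).tail.map (· + 1)) := by
    rw [continuant, lOf, reverse_reverse]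
  rw [this]
  have h := contAux_le_pow (good_zOf hp)
  rwa [length_map] at h

end Dyck

/-- Finiteness of the solution set. -/
lemma finiteS (n : ℕ) :
    Finite {l : List ℕ // (∀ x ∈ l, 0 < x) ∧ BddAvg 2 l ∧ continuant l ≤ n} := by
  have hS : {l : List ℕ | (∀ x ∈ l, 0 < x) ∧ BddAvg 2 l ∧ continuant l ≤ n}.Finite := by
    apply Set.Finite.subset (s := {l : List ℕ | l.length ≤ n ∧ ∀ x ∈ l, x < 2 * n + 1})
    · -- this superset is finite
      apply Set.Finite.of_finite_image
        (f := fun l => l.map (fun c => (⟨c % (2 * n + 1), Nat.mod_lt _ (by omega)⟩ : Fin (2 * n + 1))))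
      · apply Set.Finite.subset (List.finite_length_le (Fin (2 * n + 1)) n)
        rintro v ⟨l, hl, rfl⟩
        simpa using hl.1
      · intro l₁ h₁ l₂ h₂ heq
        have recov : ∀ l : List ℕ, (∀ x ∈ l, x < 2 * n + 1) →
            (l.map (fun c => (⟨c % (2 * n + 1), Nat.mod_lt _ (by omega)⟩ : Fin (2 * n + 1)))).map
              (Fin.val) = l := by
          intro l hl
          rw [List.map_map]
          have : ∀ a ∈ l, ((fun c => ((⟨c % (2 * n + 1), Nat.mod_lt _ (by omega)⟩ :
              Fin (2 * n + 1)) : Fin (2 * n + 1)).val) ) a = id a := by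
            intro a ha
            simp [Nat.mod_eq_of_lt (hl a ha)]
          calc l.map _ = l.map id := List.map_congr_left this
          _ = l := List.map_id l
        calc l₁ = _ := (recov l₁ h₁.2).symm
        _ = _ := congrArg (List.map Fin.val) heq
        _ = l₂ := recov l₂ h₂.2
    · -- membership
      rintro l ⟨hpos, havg, hcont⟩
      have hpos' : ∀ x ∈ l.reverse, 1 ≤ x := by
        intro x hx; exact hpos x (mem_reverse.mp hx)
      have hlen : l.length ≤ n := by
        have h1 : l.reverse.length ≤ contAux l.reverse := length_le_contAux _ hpos'
        rw [length_reverse] at h1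
        exact h1.trans (le_trans (le_refl _) hcont)
      refine ⟨hlen, ?_⟩
      intro x hx
      have hne : l ≠ [] := by rintro rfl; simp at hx
      have h1 : x ≤ l.sum := single_le_sum (fun y _ => Nat.zero_le y) x hx
      have h2 : l.sum ≤ 2 * l.length := by
        have := havg l.length (by
          rcases l with _ | ⟨a, t⟩
          · simp at hx
          · simp) le_rfl
        rwa [take_length] at this
      omega
  exact hS.to_subtype

/-- The injection from Dyck words gives the Catalan lower bound. -/
lemma catalan_le_card (n k : ℕ) (hk : 1 ≤ k) (hxk : xx ^ k ≤ (n : ℝ)) :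
    catalan k ≤ Nat.card {l : List ℕ // (∀ x ∈ l, 0 < x) ∧ BddAvg 2 l ∧ continuant l ≤ n} := by
  classical
  have hfin := finiteS n
  rw [← DyckWord.card_dyckWord_semilength_eq_catalan k, ← Nat.card_eq_fintype_card]
  have hne : ∀ (p : { p : DyckWord // p.semilength = k }), p.1.toList ≠ [] := by
    rintro ⟨p, hp⟩ h
    have : p.semilength = 0 := by
      rw [DyckWord.semilength, h]; rfl
    omega
  have hmem : ∀ (p : { p : DyckWord // p.semilength = k }),
      (∀ x ∈ lOf p.1, 0 < x) ∧ BddAvg 2 (lOf p.1) ∧ continuant (lOf p.1) ≤ n := by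
    intro p
    refine ⟨lOf_pos (hne p), lOf_bddAvg (hne p), ?_⟩
    have h1 := lOf_continuant (hne p)
    have h2 : xx ^ ((uOf p.1).tail.length) ≤ xx ^ k := by
      apply pow_le_pow_right₀ (le_of_lt one_lt_xx)
      have := length_uOf (hne p)
      have hlt : (uOf p.1).tail.length ≤ (uOf p.1).length := by
        simp [List.length_tail]
      omega
    have : (continuant (lOf p.1) : ℝ) ≤ (n : ℝ) := le_trans h1 (le_trans h2 hxk)
    exact_mod_cast this
  apply Nat.card_le_card_of_injective
    (f := fun p => (⟨lOf p.1, hmem p⟩ : {l : List ℕ // (∀ x ∈ l, 0 < x) ∧ BddAvg 2 l ∧ continuant l ≤ n}))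
  intro p₁ p₂ h
  have hl : lOf p₁.1 = lOf p₂.1 := congrArg Subtype.val h
  rw [lOf, lOf] at hl
  have htail : (uOf p₁.1).tail = (uOf p₂.1).tail := by
    have h1 := reverse_injective hl
    exact map_injective_iff.mpr (fun a b hab => by omega) h1
  have hlen1 : (uOf p₁.1).length = k := by rw [length_uOf (hne p₁), p₁.2]
  have hlen2 : (uOf p₂.1).length = k := by rw [length_uOf (hne p₂), p₂.2]
  have hsum1 : (uOf p₁.1).sum = k := by rw [sum_uOf (hne p₁), p₁.2]
  have hsum2 : (uOf p₂.1).sum = k := by rw [sum_uOf (hne p₂), p₂.2]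
  have hu : uOf p₁.1 = uOf p₂.1 := by
    rcases hu1 : uOf p₁.1 with _ | ⟨c₁, t₁⟩
    · rw [hu1] at hlen1; simp at hlen1; omega
    rcases hu2 : uOf p₂.1 with _ | ⟨c₂, t₂⟩
    · rw [hu2] at hlen2; simp at hlen2; omega
    have ht : t₁ = t₂ := by
      have := htail; rw [hu1, hu2] at this; simpa using this
    have hc : c₁ = c₂ := by
      rw [hu1] at hsum1; rw [hu2] at hsum2
      simp only [sum_cons] at hsum1 hsum2
      rw [ht] at hsum1
      omega
    rw [ht, hc]
  have henc : p₁.1.toList.reverse = p₂.1.toList.reverse := by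
    rw [← enc_uOf (hne p₁), ← enc_uOf (hne p₂), hu]
  have : p₁.1.toList = p₂.1.toList := reverse_injective henc
  exact Subtype.ext (DyckWord.ext this)

end Sbar

theorem sbar_lower_bound (ε : ℝ) (hε : 0 < ε) :
    ∃ N : ℕ, ∀ n ≥ N,
      (n : ℝ) ^ (2 * Real.log 2 / Real.log (1 + Real.sqrt 2) - ε) ≤
        (Nat.card {l : List ℕ // (∀ x ∈ l, 0 < x) ∧ BddAvg 2 l ∧
          continuant l ≤ n} : ℝ) := by
  classical
  open Filter Sbar in
  have hlogxx : 0 < Real.log xx := Real.log_pos one_lt_xx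
  have hlxx_lb : (0.69 : ℝ) ≤ Real.log xx := by
    have h1 := Real.log_two_gt_d9
    have h2 : Real.log 2 ≤ Real.log xx := by
      apply Real.log_le_log (by norm_num)
      have := xx_gt; linarith
    linarith
  have htends : Filter.Tendsto (fun r : ℝ => Real.exp (ε * r) / (ε * r) ^ 2)
      Filter.atTop Filter.atTop :=
    (Real.tendsto_exp_div_pow_atTop 2).comp (Filter.Tendsto.const_mul_atTop hε Filter.tendsto_id)
  have hev1 : ∀ᶠ r : ℝ in Filter.atTop, 16 * r ^ 2 ≤ Real.exp (ε * r) := by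
    filter_upwards [htends.eventually_ge_atTop (16 / ε ^ 2),
      Filter.eventually_ge_atTop (1 : ℝ)] with r h1 h2
    have hr : 0 < ε * r := by nlinarith
    have h3 : (16 / ε ^ 2) * (ε * r) ^ 2 ≤ Real.exp (ε * r) :=
      (le_div_iff₀ (pow_pos hr 2)).mp h1
    have h4 : (16 / ε ^ 2) * (ε * r) ^ 2 = 16 * r ^ 2 := by
      field_simp
    linarith
  have hLn : Filter.Tendsto (fun n : ℕ => Real.log n) Filter.atTop Filter.atTop :=
    Real.tendsto_log_atTop.comp tendsto_natCast_atTop_atTop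
  have hevR : ∀ᶠ r : ℝ in Filter.atTop,
      (4 * Real.log xx ≤ r ∧ 1 ≤ r ∧ 16 * r ^ 2 ≤ Real.exp (ε * r)) := by
    filter_upwards [hev1, Filter.eventually_ge_atTop (4 * Real.log xx),
      Filter.eventually_ge_atTop (1 : ℝ)] with r h1 h2 h3
    exact ⟨h2, h3, h1⟩
  have hev : ∀ᶠ n : ℕ in Filter.atTop,
      (4 * Real.log xx ≤ Real.log n ∧ 1 ≤ Real.log n ∧
        16 * (Real.log n) ^ 2 ≤ Real.exp (ε * Real.log n)) := hLn.eventually hevR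
  obtain ⟨N₀, hN₀⟩ := Filter.eventually_atTop.mp hev
  refine ⟨max N₀ 1, fun n hn => ?_⟩
  obtain ⟨hC1, hC3, hC2⟩ := hN₀ n (le_trans (le_max_left _ _) hn)
  have hn1 : 1 ≤ n := le_trans (le_max_right _ _) hn
  have hnpos : (0 : ℝ) < n := by exact_mod_cast hn1
  set L := Real.log n with hLdef
  set k := ⌊L / Real.log xx⌋₊ with hkdef
  have hk4 : 4 ≤ k := by
    apply Nat.le_floor
    rw [le_div_iff₀ hlogxx]
    push_cast
    linarith
  have hkub : (k : ℝ) ≤ L / Real.log xx := Nat.floor_le (by positivity)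
  have hkL : (k : ℝ) * Real.log xx ≤ L := (le_div_iff₀ hlogxx).mp hkub
  have hklb : L / Real.log xx < (k : ℝ) + 1 := Nat.lt_floor_add_one _
  have hLlb : L < ((k : ℝ) + 1) * Real.log xx := by
    rw [div_lt_iff₀ hlogxx] at hklb
    exact hklb
  have hxk : xx ^ k ≤ (n : ℝ) := by
    have h1 : Real.log (xx ^ k) ≤ L := by rw [Real.log_pow]; exact hkL
    calc xx ^ k = Real.exp (Real.log (xx ^ k)) := (Real.exp_log (pow_pos xx_pos k)).symm
    _ ≤ Real.exp L := Real.exp_le_exp.mpr h1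
    _ = n := Real.exp_log hnpos
  have hcard := catalan_le_card n k (by omega) hxk
  have hcatpos : 0 < catalan k := by
    have h := succ_mul_catalan_eq_centralBinom k
    have hcb := Nat.centralBinom_pos k
    by_contra hc
    push_neg at hc
    interval_cases (catalan k)
    omega
  have hcatR : (1 : ℝ) ≤ (catalan k : ℝ) := by exact_mod_cast hcatpos
  have h4k : (4 : ℝ) ^ k ≤ (k : ℝ) * (((k : ℝ) + 1) * (catalan k : ℝ)) := by
    have hnat : 4 ^ k ≤ k * ((k + 1) * catalan k) := by
      rw [succ_mul_catalan_eq_centralBinom]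
      exact le_of_lt (Nat.four_pow_lt_mul_centralBinom k hk4)
    exact_mod_cast hnat
  have hknn : (0 : ℝ) ≤ (k : ℝ) := Nat.cast_nonneg k
  have hkL2 : (k : ℝ) ≤ (3 / 2) * L := by
    nlinarith [mul_nonneg hknn (by linarith : (0:ℝ) ≤ Real.log xx - 0.69)]
  have hkk1 : (k : ℝ) * ((k : ℝ) + 1) ≤ 4 * L ^ 2 := by nlinarith
  have h4L : (4 : ℝ) ^ k ≤ 4 * L ^ 2 * (catalan k : ℝ) := by
    have h := mul_le_mul_of_nonneg_right hkk1 (by positivity : (0:ℝ) ≤ (catalan k : ℝ))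
    nlinarith [h4k]
  have hl4 : Real.log 4 = 2 * Real.log 2 := by
    rw [show (4 : ℝ) = 2 ^ 2 by norm_num, Real.log_pow]
    push_cast; ring
  have hlog4pos : 0 < Real.log 4 := by
    have := Real.log_two_gt_d9; rw [hl4]; linarith
  have hexp4 : Real.exp ((k : ℝ) * Real.log 4) = (4 : ℝ) ^ k := by
    rw [← Real.log_pow, Real.exp_log (by positivity)]
  -- the exponent inequality
  have hc1 : L * (2 * Real.log 2 / Real.log xx) ≤ (k : ℝ) * Real.log 4 + Real.log 4 := by
    have h1 : (L / Real.log xx) * Real.log 4 < ((k : ℝ) + 1) * Real.log 4 :=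
      mul_lt_mul_of_pos_right hklb hlog4pos
    have h2 : L * (2 * Real.log 2 / Real.log xx) = (L / Real.log xx) * Real.log 4 := by
      rw [hl4]; ring
    linarith
  rw [show (1 + Real.sqrt 2) = xx from rfl]
  have hrpow : (n : ℝ) ^ (2 * Real.log 2 / Real.log xx - ε)
      = Real.exp (L * (2 * Real.log 2 / Real.log xx - ε)) := by
    rw [Real.rpow_def_of_pos hnpos]
  rw [hrpow]
  have e1 : Real.exp (L * (2 * Real.log 2 / Real.log xx)) ≤ 16 * L ^ 2 * (catalan k : ℝ) := by
    calc Real.exp (L * (2 * Real.log 2 / Real.log xx))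
        ≤ Real.exp ((k : ℝ) * Real.log 4 + Real.log 4) := Real.exp_le_exp.mpr hc1
    _ = (4 : ℝ) ^ k * 4 := by
        rw [Real.exp_add, hexp4, Real.exp_log (by norm_num : (0:ℝ) < 4)]
    _ ≤ (4 * L ^ 2 * (catalan k : ℝ)) * 4 := by
        apply mul_le_mul_of_nonneg_right h4L (by norm_num)
    _ = 16 * L ^ 2 * (catalan k : ℝ) := by ring
  have e2 : Real.exp (L * (2 * Real.log 2 / Real.log xx))
      = Real.exp (L * (2 * Real.log 2 / Real.log xx - ε)) * Real.exp (ε * L) := by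
    rw [← Real.exp_add]; ring_nf
  have e3 : 16 * L ^ 2 * (catalan k : ℝ) ≤ Real.exp (ε * L) * (catalan k : ℝ) :=
    mul_le_mul_of_nonneg_right hC2 (by positivity)
  have hcancel : Real.exp (L * (2 * Real.log 2 / Real.log xx - ε)) ≤ (catalan k : ℝ) := by
    have h : Real.exp (L * (2 * Real.log 2 / Real.log xx - ε)) * Real.exp (ε * L)
        ≤ (catalan k : ℝ) * Real.exp (ε * L) := by
      rw [← e2]
      calc Real.exp (L * (2 * Real.log 2 / Real.log xx)) ≤ _ := e1
      _ ≤ Real.exp (ε * L) * (catalan k : ℝ) := e3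
      _ = (catalan k : ℝ) * Real.exp (ε * L) := by ring
    exact le_of_mul_le_mul_right h (Real.exp_pos _)
  refine hcancel.trans ?_
  exact_mod_cast hcard
end
end
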